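/- Let m ≥ 2, let Ω be an open convex subset of ℝ^m, let ρ > 0 and x₀ ∈ ℝ^m be such that the open ball B(x₀;ρ) ⊆ Ω, and let d be a point of the topological boundary of Ω. Then the Lebesgue measure of Ω satisfies |Ω| ≥ m^{-1}·ω_{m-1}·|d − x₀|·ρ^{m-1}. -/

import Mathlib

open MeasureTheory Metric

set_option maxHeartbeats 1000000 in
/-- if `Ω ⊆ ℝ^m` (`m ≥ 2`) is open and convex, contains the open ball
`B(x₀; ρ)`, and `d` is a boundary point of `Ω`, then
`|Ω| ≥ m⁻¹ ω_{m-1} |d - x₀| ρ^{m-1}`. -/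
theorem measure_ge_cone (m : ℕ) (hm : 2 ≤ m)
    (Ω : Set (EuclideanSpace ℝ (Fin m)))
    (hopen : IsOpen Ω) (hconv : Convex ℝ Ω)
    (ρ : ℝ) (hρ : 0 < ρ) (x₀ : EuclideanSpace ℝ (Fin m))
    (hball : ball x₀ ρ ⊆ Ω)
    (d : EuclideanSpace ℝ (Fin m)) (hd : d ∈ frontier Ω) :
    ENNReal.ofReal ((m : ℝ)⁻¹ *
        (volume (ball (0 : EuclideanSpace ℝ (Fin (m - 1))) 1)).toReal *
        dist d x₀ * ρ ^ (m - 1)) ≤ volume Ω := by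
  obtain ⟨n, rfl⟩ : ∃ n, m = n + 2 := ⟨m - 2, by omega⟩
  have hsub : n + 2 - 1 = n + 1 := rfl
  rw [hsub]
  set h := dist d x₀ with hh
  -- basic facts
  have hdΩ : d ∉ Ω := fun hmem => hd.2 (by rw [hopen.interior_eq]; exact hmem)
  have hρh : ρ ≤ h := by
    by_contra hc
    exact hdΩ (hball (mem_ball.2 (not_le.1 hc)))
  have hh0 : 0 < h := lt_of_lt_of_le hρ hρh
  set u : EuclideanSpace ℝ (Fin (n + 2)) := h⁻¹ • (x₀ - d) with hu_def
  have hx₀ : x₀ = d + h • u := by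
    rw [hu_def, smul_smul, mul_inv_cancel₀ hh0.ne', one_smul]
    abel
  have hnu : ‖u‖ = 1 := by
    rw [hu_def, norm_smul, Real.norm_eq_abs, abs_inv, abs_of_pos hh0]
    have hxd : ‖x₀ - d‖ = h := by rw [hh, dist_comm, dist_eq_norm]
    rw [hxd, inv_mul_cancel₀ hh0.ne']
  -- orthonormal basis with first vector u
  have hON : Orthonormal ℝ (({0} : Set (Fin (n + 2))).restrict (fun _ => u)) := by
    constructor
    · intro i; exact hnu
    · intro i j hij
      exact absurd (Subtype.ext ((Set.mem_singleton_iff.1 i.2).trans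
        (Set.mem_singleton_iff.1 j.2).symm)) hij
  obtain ⟨b, hb⟩ := hON.exists_orthonormalBasis_extension_of_card_eq
    (by simp [finrank_euclideanSpace_fin])
  have hb0 : b 0 = u := hb 0 rfl
  -- the measure preserving map
  set eF := (MeasurableEquiv.toLp 2 (Fin (n + 1) → ℝ)).symm with heF
  set eE := (MeasurableEquiv.toLp 2 (Fin (n + 2) → ℝ)).symm with heE
  set eP := MeasurableEquiv.piFinSuccAbove (fun _ : Fin (n + 2) => ℝ) 0 with heP
  set Φ : ℝ × EuclideanSpace ℝ (Fin (n + 1)) → EuclideanSpace ℝ (Fin (n + 2)) := fun p => d + b.repr.symm (eE.symm (eP.symm (p.1, eF p.2))) with hΦ_def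
  have hΦmp : MeasurePreserving Φ volume volume := by
    have h1 : MeasurePreserving (fun p : ℝ × EuclideanSpace ℝ (Fin (n + 1)) => (p.1, eF p.2)) volume volume :=
      (MeasurePreserving.id volume).prod (EuclideanSpace.volume_preserving_symm_measurableEquiv_toLp _)
    have h2 := (volume_preserving_piFinSuccAbove (fun _ : Fin (n + 2) => ℝ) 0).symm
    have h3 := (EuclideanSpace.volume_preserving_symm_measurableEquiv_toLp (Fin (n + 2))).symm
    have h4 := b.measurePreserving_repr_symm
    have h5 := measurePreserving_add_left (volume : Measure (EuclideanSpace ℝ (Fin (n + 2)))) d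
    exact (((h5.comp h4).comp h3).comp h2).comp h1
  -- evaluation of the composed equivalences
  have eval : ∀ (a : ℝ) (g : Fin (n + 1) → ℝ),
      eE.symm (eP.symm (a, g)) =
        (WithLp.toLp 2 (Fin.cons a g : ∀ _ : Fin (n + 2), ℝ) : EuclideanSpace ℝ (Fin (n + 2))) := by
    intro a g
    rw [← Fin.insertNth_zero']
    rfl
  -- decomposition of the vector
  have key : ∀ (s : ℝ) (z : EuclideanSpace ℝ (Fin (n + 1))), eE.symm (eP.symm (s, eF z)) =
      s • EuclideanSpace.single (0 : Fin (n + 2)) (1 : ℝ) + eE.symm (eP.symm ((0 : ℝ), eF z)) := by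
    intro s z
    ext i
    rw [eval, eval, PiLp.add_apply, PiLp.smul_apply]
    induction i using Fin.cases with
    | zero => simp [EuclideanSpace.single_apply]
    | succ j => simp [EuclideanSpace.single_apply, Fin.succ_ne_zero]
  have hnorm : ∀ z : EuclideanSpace ℝ (Fin (n + 1)), ‖eE.symm (eP.symm ((0 : ℝ), eF z))‖ = ‖z‖ := by
    intro z
    rw [eval, EuclideanSpace.norm_eq, EuclideanSpace.norm_eq z]
    congr 1
    have hez : ∀ x, (eF z) x = z x := fun _ => rfl
    rw [Fin.sum_univ_succ]
    simp [hez]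
  have hrepr_single : b.repr.symm (EuclideanSpace.single (0 : Fin (n + 2)) (1 : ℝ)) = u := by
    rw [← OrthonormalBasis.repr_self b 0, LinearIsometryEquiv.symm_apply_apply, hb0]
  -- the cone
  set K : Set (ℝ × EuclideanSpace ℝ (Fin (n + 1))) := {p | 0 < p.1 ∧ p.1 < h ∧ ‖p.2‖ < ρ * p.1 / h} with hK_def
  have hKopen : IsOpen K := by
    have h1 : IsOpen {p : ℝ × EuclideanSpace ℝ (Fin (n + 1)) | 0 < p.1} := isOpen_lt continuous_const continuous_fst
    have h2 : IsOpen {p : ℝ × EuclideanSpace ℝ (Fin (n + 1)) | p.1 < h} := isOpen_lt continuous_fst continuous_const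
    have h3 : IsOpen {p : ℝ × EuclideanSpace ℝ (Fin (n + 1)) | ‖p.2‖ < ρ * p.1 / h} :=
      isOpen_lt continuous_snd.norm ((continuous_const.mul continuous_fst).div_const h)
    exact h1.inter (h2.inter h3)
  -- cone is mapped into Ω
  have hKsub : K ⊆ Φ ⁻¹' Ω := by
    rintro ⟨s, z⟩ ⟨hs0, hsh, hz⟩
    set w : EuclideanSpace ℝ (Fin (n + 2)) := b.repr.symm (eE.symm (eP.symm ((0 : ℝ), eF z))) with hw_def
    have hw : ‖w‖ = ‖z‖ := by rw [hw_def, LinearIsometryEquiv.norm_map]; exact hnorm z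
    have hΦval : Φ (s, z) = d + (s • u + w) := by
      show d + b.repr.symm (eE.symm (eP.symm (s, eF z))) = d + (s • u + w)
      rw [key s z, map_add, LinearIsometryEquiv.map_smul, hrepr_single, hw_def]
    set x : EuclideanSpace ℝ (Fin (n + 2)) := x₀ + (h / s) • w with hx_def
    have hxball : x ∈ ball x₀ ρ := by
      rw [mem_ball, dist_eq_norm, hx_def, add_sub_cancel_left, norm_smul,
        Real.norm_eq_abs, abs_of_pos (div_pos hh0 hs0), hw]
      calc h / s * ‖z‖ < h / s * (ρ * s / h) :=
            mul_lt_mul_of_pos_left hz (div_pos hh0 hs0)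
        _ = ρ := by field_simp
    have hseg : Φ (s, z) ∈ openSegment ℝ x d := by
      refine ⟨s / h, 1 - s / h, div_pos hs0 hh0,
        sub_pos.2 ((div_lt_one hh0).2 hsh), by ring, ?_⟩
      rw [hΦval, hx_def, hx₀]
      match_scalars
      all_goals field_simp
      all_goals try ring
    have hmem := hconv.openSegment_interior_closure_subset_interior
      (by rw [hopen.interior_eq]; exact hball hxball) hd.1 hseg
    rw [hopen.interior_eq] at hmem
    exact hmem
  -- volume of the cone
  have hKvol : volume K = ENNReal.ofReal (ρ ^ (n + 1) * h / (n + 2)) *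
      volume (ball (0 : EuclideanSpace ℝ (Fin (n + 1))) 1) := by
    rw [Measure.volume_eq_prod, Measure.prod_apply hKopen.measurableSet]
    have slice : ∀ s : ℝ, volume (Prod.mk s ⁻¹' K) =
        Set.indicator (Set.Ioo 0 h)
          (fun t => volume (ball (0 : EuclideanSpace ℝ (Fin (n + 1))) (ρ * t / h))) s := by
      intro s
      by_cases hs : s ∈ Set.Ioo 0 h
      · rw [Set.indicator_of_mem hs]
        congr 1
        ext z
        simp [hK_def, mem_ball, dist_zero_right, hs.1, hs.2]
      · rw [Set.indicator_of_notMem hs]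
        have hemp : (Prod.mk s ⁻¹' K) = ∅ := by
          ext z
          simp only [Set.mem_preimage, hK_def, Set.mem_setOf_eq, Set.mem_empty_iff_false,
            iff_false, not_and]
          intro h1 h2
          exact absurd ⟨h1, h2⟩ hs
        rw [hemp, measure_empty]
    calc (∫⁻ s, volume (Prod.mk s ⁻¹' K))
        = ∫⁻ s in Set.Ioo 0 h, volume (ball (0 : EuclideanSpace ℝ (Fin (n + 1))) (ρ * s / h)) := by
          simp_rw [slice]
          rw [lintegral_indicator measurableSet_Ioo]
      _ = ∫⁻ s in Set.Ioo 0 h,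
            ENNReal.ofReal ((ρ * s / h) ^ (n + 1)) * volume (ball (0 : EuclideanSpace ℝ (Fin (n + 1))) 1) := by
          apply setLIntegral_congr_fun measurableSet_Ioo
          intro s hs
          dsimp only
          rw [Measure.addHaar_ball _ _ (div_nonneg (mul_nonneg hρ.le hs.1.le) hh0.le)]
          congr 2
          simp [finrank_euclideanSpace_fin]
      _ = (∫⁻ s in Set.Ioo 0 h, ENNReal.ofReal ((ρ * s / h) ^ (n + 1))) *
            volume (ball (0 : EuclideanSpace ℝ (Fin (n + 1))) 1) := by
          rw [lintegral_mul_const]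
          exact (ENNReal.measurable_ofReal.comp
            (((measurable_id.const_mul ρ).div_const h).pow_const (n + 1)))
      _ = ENNReal.ofReal (ρ ^ (n + 1) * h / (n + 2)) * volume (ball (0 : EuclideanSpace ℝ (Fin (n + 1))) 1) := by
          congr 1
          have hint : Integrable (fun s : ℝ => (ρ * s / h) ^ (n + 1))
              (volume.restrict (Set.Ioo 0 h)) := by
            show IntegrableOn (fun s : ℝ => (ρ * s / h) ^ (n + 1)) (Set.Ioo 0 h) volume
            rw [← integrableOn_Icc_iff_integrableOn_Ioo]
            exact (((continuous_const.mul continuous_id).div_const h).pow (n + 1)).integrableOn_Icc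
          rw [← ofReal_integral_eq_lintegral_ofReal hint]
          · congr 1
            have : ∀ s : ℝ, (ρ * s / h) ^ (n + 1) = (ρ / h) ^ (n + 1) * s ^ (n + 1) := by
              intro s; rw [← mul_pow]; ring_nf
            simp_rw [this]
            rw [MeasureTheory.integral_const_mul, ← MeasureTheory.integral_Ioc_eq_integral_Ioo,
              ← intervalIntegral.integral_of_le hh0.le, integral_pow]
            rw [div_pow]
            field_simp
            push_cast
            ring
          · refine (ae_restrict_iff' measurableSet_Ioo).2 (Filter.Eventually.of_forall ?_)
            intro s hs
            exact pow_nonneg (div_nonneg (mul_nonneg hρ.le hs.1.le) hh0.le) _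
  -- conclude
  have hKΩ : volume K ≤ volume Ω := by
    rw [← hΦmp.measure_preimage hopen.measurableSet.nullMeasurableSet]
    exact measure_mono hKsub
  refine le_trans ?_ hKΩ
  rw [hKvol]
  have hfin : volume (ball (0 : EuclideanSpace ℝ (Fin (n + 1))) 1) ≠ ⊤ := measure_ball_lt_top.ne
  have harr : ((n + 2 : ℕ) : ℝ)⁻¹ * (volume (ball (0 : EuclideanSpace ℝ (Fin (n + 1))) 1)).toReal * h * ρ ^ (n + 1)
      = (ρ ^ (n + 1) * h / (n + 2)) * (volume (ball (0 : EuclideanSpace ℝ (Fin (n + 1))) 1)).toReal := by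
    push_cast
    ring
  rw [harr, ENNReal.ofReal_mul (by positivity), ENNReal.ofReal_toReal hfin]
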